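/- arXiv:2402.17198 — 2 statements merged into one kernel-verified Lean document; each statement's English description precedes it below -/
import Mathlib

section
/- Every ideal in the ring of Gaussian integers Z[i] that is coprime to 1+i has a unique generator congruent to 1 modulo (1+i)^3. -/
open scoped ComplexConjugate Classical

noncomputable section

/-- The imaginary unit in the Gaussian integers `ℤ[i]`. -/
def iZ : GaussianInt := ⟨0, 1⟩

/-- `n` is primary iff `n ≡ 1 (mod (1+i)^3)`. -/
def IsPrimary (n : GaussianInt) : Prop := (1 + iZ) ^ 3 ∣ n - 1

lemma dvd_lam3 (z : GaussianInt) :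
    (1 + iZ) ^ 3 ∣ z ↔ 2 ∣ z.re ∧ 2 ∣ z.im ∧ 4 ∣ z.re + z.im := by
  have h3 : ((1+iZ)^3 : GaussianInt) = ⟨-2,2⟩ := by decide
  rw [h3]
  constructor
  · rintro ⟨c, rfl⟩
    simp [Zsqrtd.re_mul, Zsqrtd.im_mul]
    omega
  · rintro ⟨⟨x, hx⟩, ⟨y, hy⟩, ⟨w, hw⟩⟩
    refine ⟨⟨(z.im - z.re)/4, -(z.re + z.im)/4⟩, ?_⟩
    ext <;> simp [Zsqrtd.re_mul, Zsqrtd.im_mul] <;> omega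

lemma dvd_lam (z : GaussianInt) : (1 + iZ) ∣ z ↔ 2 ∣ z.re + z.im := by
  have h1 : ((1+iZ) : GaussianInt) = ⟨1,1⟩ := by decide
  rw [h1]
  constructor
  · rintro ⟨c, rfl⟩
    simp [Zsqrtd.re_mul, Zsqrtd.im_mul]
    omega
  · rintro ⟨x, hx⟩
    refine ⟨⟨(z.re + z.im)/2, (z.im - z.re)/2⟩, ?_⟩
    ext <;> simp [Zsqrtd.re_mul, Zsqrtd.im_mul] <;> omega

lemma unit_eq_one (u : GaussianInt) (hu : IsUnit u)
    (h : (1 + iZ) ^ 3 ∣ u - 1) : u = 1 := by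
  rw [dvd_lam3] at h
  simp only [Zsqrtd.re_sub, Zsqrtd.im_sub, Zsqrtd.re_one, Zsqrtd.im_one, sub_zero] at h
  have hn : u.norm = 1 := (Zsqrtd.norm_eq_one_iff' (by norm_num) u).mpr hu
  have hn' : u.re * u.re + u.im * u.im = 1 := by
    have := Zsqrtd.norm_def u; linarith
  have h1 : u.re ≤ 1 ∧ -1 ≤ u.re ∧ u.im ≤ 1 ∧ -1 ≤ u.im := by
    refine ⟨?_, ?_, ?_, ?_⟩ <;> nlinarith [mul_self_nonneg u.re, mul_self_nonneg u.im]
  have hre : u.re = 1 ∧ u.im = 0 := by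
    obtain ⟨h1, h2, h3, h4⟩ := h1
    interval_cases hr : u.re <;> interval_cases hi : u.im <;> omega
  ext <;> simp [hre.1, hre.2]

/-- Every ideal of `ℤ[i]` coprime to `(1+i)` has a unique generator congruent to `1`
modulo `(1+i)^3` (a unique primary generator). -/
theorem stmt0 (I : Ideal GaussianInt)
    (hco : I ⊔ Ideal.span {(1 + iZ : GaussianInt)} = ⊤) :
    ∃! g : GaussianInt, I = Ideal.span {g} ∧ (1 + iZ) ^ 3 ∣ g - 1 := by
  obtain ⟨g, rfl⟩ := (IsPrincipalIdealRing.principal I).principal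
  simp only [Ideal.submodule_span_eq] at *
  -- g is not divisible by 1+i
  have hnd : ¬ (1 + iZ) ∣ g := by
    intro hd
    have hle : Ideal.span {g} ≤ Ideal.span {(1 + iZ : GaussianInt)} :=
      Ideal.span_singleton_le_span_singleton.mpr hd
    have : Ideal.span {(1 + iZ : GaussianInt)} = ⊤ := by
      rw [← hco, sup_eq_right.mpr hle]
    rw [Ideal.span_singleton_eq_top] at this
    have := (Zsqrtd.norm_eq_one_iff' (by norm_num) _).mpr this
    have h2 : ((1+iZ) : GaussianInt).norm = 2 := by decide
    omega
  rw [dvd_lam] at hnd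
  -- find a unit u such that u * g is primary
  have key : ∃ u : GaussianInt, IsUnit u ∧ (1 + iZ) ^ 3 ∣ u * g - 1 := by
    have hiu : IsUnit iZ := isUnit_iff_exists_inv.mpr ⟨-iZ, by decide⟩
    have hd : (2 ∣ g.re - 1 ∧ 2 ∣ g.im ∧ 4 ∣ g.re - 1 + g.im)
        ∨ (2 ∣ -g.re - 1 ∧ 2 ∣ -g.im ∧ 4 ∣ -g.re - 1 + -g.im)
        ∨ (2 ∣ -g.im - 1 ∧ 2 ∣ g.re ∧ 4 ∣ -g.im - 1 + g.re)
        ∨ (2 ∣ g.im - 1 ∧ 2 ∣ -g.re ∧ 4 ∣ g.im - 1 + -g.re) := by omega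
    rcases hd with h | h | h | h
    · exact ⟨1, isUnit_one, by rw [dvd_lam3]; simpa using h⟩
    · exact ⟨-1, IsUnit.neg isUnit_one, by
        rw [dvd_lam3]; simpa [Zsqrtd.re_mul, Zsqrtd.im_mul] using h⟩
    · exact ⟨iZ, hiu, by
        rw [dvd_lam3]; simp [iZ, Zsqrtd.re_mul, Zsqrtd.im_mul]; omega⟩
    · exact ⟨-iZ, hiu.neg, by
        rw [dvd_lam3]; simp [iZ, Zsqrtd.re_mul, Zsqrtd.im_mul]; omega⟩
  obtain ⟨u, hu, hprim⟩ := key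
  refine ⟨u * g, ⟨?_, hprim⟩, ?_⟩
  · rw [Ideal.span_singleton_eq_span_singleton]
    exact (Associated.symm (associated_unit_mul_left g u hu))
  · rintro y ⟨hy1, hy2⟩
    -- y and u*g generate the same ideal, both primary
    have hassoc : Associated (u * g) y := by
      rw [← Ideal.span_singleton_eq_span_singleton]
      rw [← hy1, Ideal.span_singleton_eq_span_singleton]
      exact associated_unit_mul_left g u hu
    obtain ⟨v, hv⟩ := hassoc
    have hvdvd : (1 + iZ) ^ 3 ∣ (v : GaussianInt) - 1 := by
      have h1 : (v : GaussianInt) - 1 = (y - 1) - (v : GaussianInt) * (u * g - 1) := by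
        rw [← hv]; ring
      rw [h1]
      exact dvd_sub hy2 (Dvd.dvd.mul_left hprim _)
    have hv1 : (v : GaussianInt) = 1 := unit_eq_one _ v.isUnit hvdvd
    rw [← hv, hv1, mul_one]

/-- keep IsPrimary referenced -/
example (n : GaussianInt) : IsPrimary n ↔ (1 + iZ) ^ 3 ∣ n - 1 := Iff.rfl
end
end

section
/- For any primary element n = a + bi of Z[i] with a, b ∈ Z, the quartic residue symbol satisfies (i/n)_4 = i^{(1-a)/2}. -/
open scoped ComplexConjugate Classical

noncomputable section

/-- An abstract quartic residue symbol on `ℤ[i]`, characterized by its defining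
properties: at odd primes it is the fourth root of unity congruent to
`a^((N ϖ - 1)/4) mod ϖ`, it vanishes when the arguments are not coprime, it is
extended multiplicatively in the denominator (being `1` at units), and it is
multiplicative in the numerator. -/
structure QuarticResidueSymbol where
  sym : GaussianInt → GaussianInt → GaussianInt
  sym_pow_four : ∀ ϖ a : GaussianInt, Prime ϖ → IsCoprime ϖ 2 → IsCoprime a ϖ →
    sym a ϖ ^ 4 = 1
  sym_spec : ∀ ϖ a : GaussianInt, Prime ϖ → IsCoprime ϖ 2 → IsCoprime a ϖ →
    ϖ ∣ sym a ϖ - a ^ (((Zsqrtd.norm ϖ - 1) / 4).toNat)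
  sym_eq_zero : ∀ ϖ a : GaussianInt, Prime ϖ → IsCoprime ϖ 2 → ¬ IsCoprime a ϖ →
    sym a ϖ = 0
  sym_mul_right : ∀ a c c' : GaussianInt, IsCoprime c 2 → IsCoprime c' 2 →
    sym a (c * c') = sym a c * sym a c'
  sym_unit_right : ∀ (a : GaussianInt) (u : GaussianIntˣ), sym a (u : GaussianInt) = 1
  sym_mul_left : ∀ a b c : GaussianInt, IsCoprime c 2 →
    sym (a * b) c = sym a c * sym b c

/- ### Auxiliary lemmas -/

lemma iZ_pow_four : iZ ^ 4 = 1 := by decide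

lemma isUnit_iZ : IsUnit iZ := ⟨⟨iZ, -iZ, by decide, by decide⟩, rfl⟩

lemma onePlusI_cube : (1 + iZ) ^ 3 = (⟨-2, 2⟩ : GaussianInt) := by decide

lemma isPrimary_iff (n : GaussianInt) :
    IsPrimary n ↔ 2 ∣ n.im ∧ 4 ∣ (n.re - 1 - n.im) := by
  rw [IsPrimary, onePlusI_cube]
  constructor
  · rintro ⟨⟨s, t⟩, h⟩
    have h1 : n.re - 1 = -2 * s - 2 * t := by
      have := congrArg Zsqrtd.re h
      simp [Zsqrtd.re_mul, GaussianInt] at this; omega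
    have h2 : n.im = 2 * s - 2 * t := by
      have := congrArg Zsqrtd.im h
      rw [Zsqrtd.im_sub] at this; simp [Zsqrtd.im_mul] at this; omega
    omega
  · rintro ⟨h1, h2⟩
    refine ⟨⟨(n.im - (n.re - 1)) / 4, -((n.re - 1) + n.im) / 4⟩, ?_⟩
    have ⟨p, hp⟩ := h1
    have ⟨q, hq⟩ := h2
    ext <;> simp [Zsqrtd.re_mul, Zsqrtd.im_mul] <;> omega

lemma coprime_two_of (n : GaussianInt) (h1 : 2 ∣ n.im) (h2 : 2 ∣ n.re - 1) :
    IsCoprime n 2 := by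
  obtain ⟨p, hp⟩ := h1
  obtain ⟨q, hq⟩ := h2
  refine ⟨1, ⟨-q, -p⟩, ?_⟩
  ext <;> simp [Zsqrtd.re_mul, Zsqrtd.im_mul] <;> omega

lemma IsPrimary.coprime_two {n : GaussianInt} (hn : IsPrimary n) : IsCoprime n 2 := by
  rw [isPrimary_iff] at hn
  exact coprime_two_of n hn.1 (by omega)

lemma root_unique (ϖ x y : GaussianInt) (hp : Prime ϖ) (hc : IsCoprime ϖ 2)
    (hx : x ^ 4 = 1) (hy : y ^ 4 = 1) (hd : ϖ ∣ x - y) : x = y := by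
  have hcontra : ¬ ϖ ∣ (2 : GaussianInt) := fun h => hp.not_unit (hc.isUnit_of_dvd h)
  have h0 : (x ^ 2 - y ^ 2) * (x ^ 2 + y ^ 2) = 0 := by
    have : x ^ 4 - y ^ 4 = 0 := by rw [hx, hy]; ring
    linear_combination this
  rcases mul_eq_zero.mp h0 with h | h
  · have h' : (x - y) * (x + y) = 0 := by linear_combination h
    rcases mul_eq_zero.mp h' with h'' | h''
    · exact sub_eq_zero.mp h''
    · have hxy : x = -y := by linear_combination h''
      exfalso
      apply hcontra
      have h1 : ϖ ∣ (-2) * y := by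
        convert hd using 1; rw [hxy]; ring
      have h2 : ϖ ∣ ((-2) * y) * (-y ^ 3) := Dvd.dvd.mul_right h1 _
      have h3 : ((-2) * y) * (-y ^ 3) = 2 * y ^ 4 := by ring
      rw [h3, hy, mul_one] at h2
      exact h2
  · exfalso
    apply hcontra
    have hd2 : ϖ ∣ x ^ 2 - y ^ 2 := hd.trans ⟨x + y, by ring⟩
    have hx2 : x ^ 2 - y ^ 2 = -2 * y ^ 2 := by linear_combination h
    rw [hx2] at hd2
    have h2 : ϖ ∣ (-2 * y ^ 2) * (-y ^ 2) := hd2.mul_right _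
    have h3 : (-2 * y ^ 2) * (-y ^ 2) = 2 * y ^ 4 := by ring
    rw [h3, hy, mul_one] at h2
    exact h2

lemma isCoprime_iZ (ϖ : GaussianInt) : IsCoprime iZ ϖ :=
  ⟨-iZ, 0, by rw [zero_mul, add_zero]; decide⟩

lemma I_zpow_congr (j k : ℤ) (h : (4 : ℤ) ∣ j - k) : Complex.I ^ j = Complex.I ^ k := by
  obtain ⟨t, ht⟩ := h
  have hj : j = k + 4 * t := by omega
  rw [hj, zpow_add₀ Complex.I_ne_zero, zpow_mul,
    show ((4 : ℤ)) = ((4 : ℕ) : ℤ) from rfl, zpow_natCast, Complex.I_pow_four, one_zpow, mul_one]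

lemma exp_congr (l m a b : ℤ) (hb : b = 2 * l) (ha : a = 1 + 2 * l + 4 * m) :
    (4 : ℤ) ∣ (a ^ 2 + b ^ 2 - 1) / 4 - (1 - a) / 2 ∧ (4 : ℤ) ∣ a ^ 2 + b ^ 2 - 1 ∧
      (2 : ℤ) ∣ 1 - a := by
  subst hb ha
  obtain ⟨c, hc⟩ := Int.even_mul_succ_self l
  have h4 : ((1 + 2 * l + 4 * m) ^ 2 + (2 * l) ^ 2 - 1)
      = 4 * ((l + 2 * m) * (1 + l + 2 * m) + l ^ 2) := by ring
  have h2 : (1 - (1 + 2 * l + 4 * m)) = 2 * (-(l + 2 * m)) := by ring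
  rw [h4, h2, Int.mul_ediv_cancel_left _ (by norm_num), Int.mul_ediv_cancel_left _ (by norm_num)]
  exact ⟨⟨c + l * m + m ^ 2 + m, by linear_combination 2 * hc⟩, ⟨_, rfl⟩, ⟨_, rfl⟩⟩

lemma exp_add (p q r s a b c d : ℤ) (hb : b = 2 * p) (ha : a = 1 + 2 * p + 4 * q)
    (hd : d = 2 * r) (hc : c = 1 + 2 * r + 4 * s) :
    (4 : ℤ) ∣ (1 - (a * c - b * d)) / 2 - ((1 - a) / 2 + (1 - c) / 2) := by
  subst hb ha hd hc
  have h1 : (1 - ((1 + 2*p + 4*q) * (1 + 2*r + 4*s) - 2*p * (2*r)))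
      = 2 * (-p - 2*q - r - 2*s - 4*p*s - 4*q*r - 8*q*s) := by ring
  have h2 : (1 - (1 + 2*p + 4*q)) = 2 * (-(p + 2*q)) := by ring
  have h3 : (1 - (1 + 2*r + 4*s)) = 2 * (-(r + 2*s)) := by ring
  rw [h1, h2, h3, Int.mul_ediv_cancel_left _ (by norm_num),
    Int.mul_ediv_cancel_left _ (by norm_num), Int.mul_ediv_cancel_left _ (by norm_num)]
  exact ⟨-(p*s) - q*r - 2*(q*s), by ring⟩

lemma quotient_primary (ϖ m : GaussianInt) (hϖ2 : IsCoprime ϖ 2) (hϖ : IsPrimary ϖ)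
    (hn : IsPrimary (ϖ * m)) : IsPrimary m := by
  have hc4 : ((1 + iZ) ^ 3 : GaussianInt) ∣ 4 := ⟨⟨-1, -1⟩, by decide⟩
  have h4 : IsCoprime ϖ (4 : GaussianInt) := by
    have : (4 : GaussianInt) = 2 * 2 := by norm_num
    rw [this]
    exact hϖ2.mul_right hϖ2
  have hcop : IsCoprime ((1 + iZ) ^ 3) ϖ :=
    IsCoprime.of_isCoprime_of_dvd_left h4.symm hc4
  have hdvd : (1 + iZ) ^ 3 ∣ ϖ * (m - 1) := by
    have := dvd_sub hn hϖ
    have heq : (ϖ * m - 1) - (ϖ - 1) = ϖ * (m - 1) := by ring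
    rwa [heq] at this
  exact hcop.dvd_of_dvd_mul_left hdvd

lemma not_isUnit_onePlusI : ¬ IsUnit (1 + iZ) := by
  intro h
  have := Zsqrtd.norm_eq_one_iff.mpr h
  have h2 : (1 + iZ : GaussianInt) = ⟨1, 1⟩ := by decide
  rw [h2] at this
  simp [Zsqrtd.norm] at this

lemma exists_primary_assoc (p : GaussianInt) (hcop : IsCoprime p 2) :
    ∃ u : GaussianInt, IsUnit u ∧ IsPrimary (u * p) := by
  -- p.re + p.im is odd
  have hodd : ¬ (2 ∣ p.re + p.im) := by
    intro h
    apply not_isUnit_onePlusI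
    refine hcop.isUnit_of_dvd' ?_ ?_
    · -- (1+i) ∣ p
      obtain ⟨k, hk⟩ := h
      refine ⟨⟨(p.re + p.im) / 2, (p.im - p.re) / 2⟩, ?_⟩
      ext <;> simp [Zsqrtd.re_add, Zsqrtd.im_add, Zsqrtd.re_mul, Zsqrtd.im_mul, iZ] <;> omega
    · exact ⟨⟨1, -1⟩, by decide⟩
  rcases Int.even_or_odd p.re with he | ho
  · -- p.re even, p.im odd; use iZ * p = ⟨-p.im, p.re⟩ or -iZ * p = ⟨p.im, -p.re⟩
    obtain ⟨k, hk⟩ := he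
    by_cases h4 : (4 : ℤ) ∣ -p.im - 1 - p.re
    · refine ⟨iZ, isUnit_iZ, ?_⟩
      rw [isPrimary_iff]
      have hre : (iZ * p).re = -p.im := by simp [Zsqrtd.re_mul, iZ]
      have him : (iZ * p).im = p.re := by simp [Zsqrtd.im_mul, iZ]
      rw [hre, him]
      omega
    · refine ⟨-iZ, isUnit_iZ.neg, ?_⟩
      rw [isPrimary_iff]
      have hre : ((-iZ) * p).re = p.im := by simp [Zsqrtd.re_mul, iZ]
      have him : ((-iZ) * p).im = -p.re := by simp [Zsqrtd.im_mul, iZ]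
      rw [hre, him]
      omega
  · -- p.re odd, p.im even; use p or -p
    obtain ⟨k, hk⟩ := ho
    by_cases h4 : (4 : ℤ) ∣ p.re - 1 - p.im
    · refine ⟨1, isUnit_one, ?_⟩
      rw [isPrimary_iff, one_mul]
      omega
    · refine ⟨-1, isUnit_one.neg, ?_⟩
      rw [isPrimary_iff]
      have hre : ((-1 : GaussianInt) * p).re = -p.re := by simp
      have him : ((-1 : GaussianInt) * p).im = -p.im := by simp
      rw [hre, him]
      omega

lemma norm_eq_sq (n : GaussianInt) : n.norm = n.re ^ 2 + n.im ^ 2 := by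
  rw [Zsqrtd.norm_def]; ring

lemma primary_unit (n : GaussianInt) (hu : IsUnit n) (hp : IsPrimary n) : n = 1 := by
  have h1 : n.norm.natAbs = 1 := Zsqrtd.norm_eq_one_iff.mpr hu
  have hnn : 0 ≤ n.norm := Zsqrtd.norm_nonneg (by norm_num) n
  have hn1 : n.re ^ 2 + n.im ^ 2 = 1 := by
    rw [← norm_eq_sq]; omega
  rw [isPrimary_iff] at hp
  have hb1 : -1 ≤ n.re := by nlinarith [sq_nonneg n.im, sq_nonneg (n.re + 1)]
  have hb2 : n.re ≤ 1 := by nlinarith [sq_nonneg n.im, sq_nonneg (n.re - 1)]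
  have hb3 : -1 ≤ n.im := by nlinarith [sq_nonneg n.re, sq_nonneg (n.im + 1)]
  have hb4 : n.im ≤ 1 := by nlinarith [sq_nonneg n.re, sq_nonneg (n.im - 1)]
  have : n.re = 1 ∧ n.im = 0 := by
    interval_cases h : n.re <;> interval_cases h' : n.im <;> simp_all <;> omega
  ext <;> simp [this.1, this.2]

lemma toComplex_iZ : GaussianInt.toComplex iZ = Complex.I := by
  show GaussianInt.toComplex ⟨0, 1⟩ = Complex.I
  rw [GaussianInt.toComplex_def']
  simp

lemma sym_at_prime (S : QuarticResidueSymbol) (q : GaussianInt) (hq : Prime q)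
    (hq2 : IsCoprime q 2) :
    S.sym iZ q = iZ ^ ((Zsqrtd.norm q - 1) / 4).toNat := by
  apply root_unique q _ _ hq hq2
  · exact S.sym_pow_four q iZ hq hq2 (isCoprime_iZ q)
  · rw [← pow_mul, mul_comm, pow_mul, iZ_pow_four, one_pow]
  · exact S.sym_spec q iZ hq hq2 (isCoprime_iZ q)

lemma key (S : QuarticResidueSymbol) (N : ℕ) : ∀ n : GaussianInt,
    n.norm.toNat ≤ N → IsPrimary n →
    GaussianInt.toComplex (S.sym iZ n) = Complex.I ^ (((1 - n.re) / 2 : ℤ)) := by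
  induction N with
  | zero =>
    intro n hN hn
    exfalso
    have hnn : 0 ≤ n.norm := Zsqrtd.norm_nonneg (by norm_num) n
    have h0 : n.norm = 0 := by omega
    have hn0 : n = 0 := (Zsqrtd.norm_eq_zero (by intro k; nlinarith [mul_self_nonneg k]) n).mp h0
    rw [isPrimary_iff, hn0] at hn
    simp at hn
  | succ N ih =>
    intro n hN hn
    by_cases hu : IsUnit n
    · have h1 : n = 1 := primary_unit n hu hn
      subst h1
      have := S.sym_unit_right iZ 1
      rw [Units.val_one] at this
      rw [this]
      have : ((1 : GaussianInt).re : ℤ) = 1 := Zsqrtd.re_one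
      rw [this]
      norm_num
    · have hn0 : n ≠ 0 := by
        intro h
        rw [isPrimary_iff, h] at hn
        simp at hn
      obtain ⟨p, hirr, hdvd⟩ := WfDvdMonoid.exists_irreducible_factor hu hn0
      have hp : Prime p := UniqueFactorizationMonoid.irreducible_iff_prime.mp hirr
      have hn2 : IsCoprime n 2 := hn.coprime_two
      have hp2 : IsCoprime p 2 := IsCoprime.of_isCoprime_of_dvd_left hn2 hdvd
      obtain ⟨u, huu, hupr⟩ := exists_primary_assoc p hp2
      obtain ⟨v, rfl⟩ := huu
      set q : GaussianInt := (v : GaussianInt) * p with hqdef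
      have hassoc : Associated p q := ⟨v, mul_comm p v⟩
      have hq : Prime q := hassoc.prime hp
      have hq2 : IsCoprime q 2 := hupr.coprime_two
      have hqd : q ∣ n := hassoc.symm.dvd.trans hdvd
      obtain ⟨m, rfl⟩ := hqd
      have hm : IsPrimary m := quotient_primary q m hq2 hupr hn
      have hm2 : IsCoprime m 2 := hm.coprime_two
      -- norm bounds
      have hq0 : q ≠ 0 := hq.ne_zero
      have hm0 : m ≠ 0 := by
        intro h; exact hn0 (by rw [h, mul_zero])
      have hnormq : 2 ≤ q.norm := by
        have h1 : q.norm.natAbs ≠ 1 := fun h => hq.not_unit (Zsqrtd.norm_eq_one_iff.mp h)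
        have h2 : q.norm ≠ 0 :=
          fun h => hq0 ((Zsqrtd.norm_eq_zero (by intro k; nlinarith [mul_self_nonneg k]) q).mp h)
        have h3 : 0 ≤ q.norm := Zsqrtd.norm_nonneg (by norm_num) q
        omega
      have hnormm : 1 ≤ m.norm := by
        have h2 : m.norm ≠ 0 :=
          fun h => hm0 ((Zsqrtd.norm_eq_zero (by intro k; nlinarith [mul_self_nonneg k]) m).mp h)
        have h3 : 0 ≤ m.norm := Zsqrtd.norm_nonneg (by norm_num) m
        omega
      have hmN : m.norm.toNat ≤ N := by
        have hmul : (q * m).norm = q.norm * m.norm := Zsqrtd.norm_mul q m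
        have h1 : (q * m).norm.toNat ≤ N + 1 := hN
        have h2 : 2 * m.norm ≤ q.norm * m.norm := by nlinarith
        have h3 : 0 ≤ (q*m).norm := Zsqrtd.norm_nonneg (by norm_num) _
        omega
      have ihm := ih m hmN hm
      -- primary parameters
      obtain ⟨hb, ha⟩ := (isPrimary_iff q).mp hupr
      obtain ⟨hd, hc⟩ := (isPrimary_iff m).mp hm
      obtain ⟨P, hP⟩ := hb
      obtain ⟨Q, hQ⟩ := ha
      obtain ⟨R, hR⟩ := hd
      obtain ⟨Ss, hS⟩ := hc
      have haq : q.re = 1 + 2 * P + 4 * Q := by omega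
      have hcm : m.re = 1 + 2 * R + 4 * Ss := by omega
      -- value at the prime q
      have hsym := sym_at_prime S q hq hq2
      have hcong := exp_congr P Q q.re q.im hP haq
      have hadd := exp_add P Q R Ss q.re q.im m.re m.im hP haq hR hcm
      have hnormq_eq : q.norm = q.re ^ 2 + q.im ^ 2 := norm_eq_sq q
      have hK : (((Zsqrtd.norm q - 1) / 4).toNat : ℤ) = (q.re ^ 2 + q.im ^ 2 - 1) / 4 := by
        rw [hnormq_eq] at hnormq ⊢
        have h1 : (0 : ℤ) ≤ (q.re ^ 2 + q.im ^ 2 - 1) / 4 := Int.ediv_nonneg (by nlinarith) (by norm_num)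
        rw [Int.toNat_of_nonneg h1]
      have hmulre : (q * m).re = q.re * m.re - q.im * m.im := by
        rw [Zsqrtd.re_mul]; ring
      rw [S.sym_mul_right iZ q m hq2 hm2, map_mul, ihm, hsym, map_pow, toComplex_iZ,
        ← zpow_natCast, ← zpow_add₀ Complex.I_ne_zero]
      apply I_zpow_congr
      rw [hmulre, hK]
      obtain ⟨t1, ht1⟩ := hcong.1
      obtain ⟨t2, ht2⟩ := hadd
      exact ⟨t1 - t2, by linarith⟩

/-- Supplementary law: for primary `n = a + bi`, `(i/n)₄ = i^{(1-a)/2}`. -/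
theorem stmt3 (S : QuarticResidueSymbol) (n : GaussianInt) (hn : IsPrimary n) :
    GaussianInt.toComplex (S.sym iZ n) = Complex.I ^ (((1 - n.re) / 2 : ℤ)) := by
  exact key S n.norm.toNat n le_rfl hn
end
end
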